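/- The function f(a) = −15 + 6·2^a − 3^a satisfies f(4) = 0 and f(a) < 0 for all a > 4. -/

import Mathlib

open Real

lemma log_ineq : 32 * Real.log 2 < 27 * Real.log 3 := by
  have h : Real.log ((2:ℝ)^(32:ℕ)) < Real.log ((3:ℝ)^(27:ℕ)) := by
    apply Real.log_lt_log (by positivity)
    norm_num
  rwa [Real.log_pow, Real.log_pow] at h
  
lemma deriv_f (x : ℝ) : HasDerivAt (fun a : ℝ => -15 + 6 * (2:ℝ) ^ a - (3:ℝ) ^ a)
    (6 * ((2:ℝ) ^ x * Real.log 2) - (3:ℝ) ^ x * Real.log 3) x := by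
  have h2 := (Real.hasStrictDerivAt_const_rpow (by norm_num : (0:ℝ) < 2) x).hasDerivAt
  have h3 := (Real.hasStrictDerivAt_const_rpow (by norm_num : (0:ℝ) < 3) x).hasDerivAt
  exact ((h2.const_mul 6).const_add (-15)).sub h3

lemma f_deriv_neg {x : ℝ} (hx : 4 < x) :
    6 * ((2:ℝ) ^ x * Real.log 2) - (3:ℝ) ^ x * Real.log 3 < 0 := by
  have hx0 : (0:ℝ) < x := by linarith
  have h2pos : (0:ℝ) < (2:ℝ) ^ x := Real.rpow_pos_of_pos (by norm_num) x
  have hlog2 : (0:ℝ) < Real.log 2 := Real.log_pos (by norm_num)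
  have hlog3 : (0:ℝ) < Real.log 3 := Real.log_pos (by norm_num)
  -- 3^x = 2^x * (3/2)^x ≥ 2^x * (3/2)^4
  have key : (2:ℝ) ^ x * ((3/2:ℝ) ^ (4:ℝ)) ≤ (3:ℝ) ^ x := by
    have h1 : ((3/2:ℝ)) ^ (4:ℝ) ≤ (3/2:ℝ) ^ x :=
      Real.rpow_le_rpow_left_iff (by norm_num : (1:ℝ) < 3/2) |>.mpr hx.le
    calc (2:ℝ) ^ x * ((3/2:ℝ) ^ (4:ℝ)) ≤ (2:ℝ) ^ x * (3/2:ℝ) ^ x := by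
          exact mul_le_mul_of_nonneg_left h1 h2pos.le
      _ = (3:ℝ) ^ x := by
          rw [← Real.mul_rpow (by norm_num) (by norm_num)]; norm_num
  have h32 : ((3/2:ℝ)) ^ (4:ℝ) = 81/16 := by
    rw [show (4:ℝ) = ((4:ℕ):ℝ) by norm_num, Real.rpow_natCast]; norm_num
  rw [h32] at key
  have hli := log_ineq
  nlinarith [mul_le_mul_of_nonneg_right key hlog3.le, h2pos]

theorem f_four_zero_and_neg :
    (-15 + 6 * (2:ℝ) ^ (4:ℝ) - (3:ℝ) ^ (4:ℝ) = 0) ∧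
      ∀ a : ℝ, 4 < a → -15 + 6 * (2:ℝ) ^ a - (3:ℝ) ^ a < 0 := by
  have h4 : (-15:ℝ) + 6 * (2:ℝ) ^ (4:ℝ) - (3:ℝ) ^ (4:ℝ) = 0 := by
    rw [show (4:ℝ) = ((4:ℕ):ℝ) by norm_num, Real.rpow_natCast, Real.rpow_natCast]
    norm_num
  refine ⟨h4, fun a ha => ?_⟩
  have anti : StrictAntiOn (fun a : ℝ => -15 + 6 * (2:ℝ) ^ a - (3:ℝ) ^ a) (Set.Ici 4) := by
    apply strictAntiOn_of_deriv_neg (convex_Ici 4)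
    · intro x _
      exact ((deriv_f x).continuousAt).continuousWithinAt
    · intro x hx
      rw [interior_Ici] at hx
      rw [(deriv_f x).deriv]
      exact f_deriv_neg hx
  have := anti (Set.self_mem_Ici) (Set.mem_Ici.mpr ha.le) ha
  exact this.trans_eq h4
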